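/- For the Werner state ρ_α = (1/4)(𝟙⊗𝟙 − α σᵢ⊗σᵢ) with α > 1/3, the state ρ₀ = (1/4)(𝟙⊗𝟙 − (1/3) σᵢ⊗σᵢ) satisfies ‖ρ₀ − ρ_α‖_HS = (√3/2)(α − 1/3), and the operator A_opt = (1/(2√3))(𝟙⊗𝟙 + σᵢ⊗σᵢ) satisfies Tr(ρ_α A_opt) = −(√3/2)(α − 1/3) < 0 and Tr(ρ₀ A_opt) = 0. -/

import Mathlib

open Matrix Kronecker

noncomputable section

def pauli : Fin 3 → Matrix (Fin 2) (Fin 2) ℂ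
  | 0 => !![0, 1; 1, 0]
  | 1 => !![0, -Complex.I; Complex.I, 0]
  | 2 => !![1, 0; 0, -1]

/-- Σᵢ σᵢ ⊗ σᵢ. -/
def paulidot : Matrix (Fin 2 × Fin 2) (Fin 2 × Fin 2) ℂ := ∑ i, pauli i ⊗ₖ pauli i

/-- Werner state in Bloch form: ρ_α = (1/4)(𝟙⊗𝟙 − α Σᵢ σᵢ⊗σᵢ). -/
def wernerBloch (α : ℝ) : Matrix (Fin 2 × Fin 2) (Fin 2 × Fin 2) ℂ :=
  ((1 / 4 : ℝ) : ℂ) • ((1 : Matrix (Fin 2 × Fin 2) (Fin 2 × Fin 2) ℂ) - (α : ℂ) • paulidot)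

/-- The nearest separable state ρ₀ = (1/4)(𝟙⊗𝟙 − (1/3) Σᵢ σᵢ⊗σᵢ). -/
def ρ₀ : Matrix (Fin 2 × Fin 2) (Fin 2 × Fin 2) ℂ := wernerBloch (1 / 3)

/-- The optimal entanglement witness A_opt = (1/(2√3))(𝟙⊗𝟙 + Σᵢ σᵢ⊗σᵢ). -/
def Aopt : Matrix (Fin 2 × Fin 2) (Fin 2 × Fin 2) ℂ :=
  (((2 * Real.sqrt 3)⁻¹ : ℝ) : ℂ) •
    ((1 : Matrix (Fin 2 × Fin 2) (Fin 2 × Fin 2) ℂ) + paulidot)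

/-- Hilbert–Schmidt norm. -/
def hsNorm (A : Matrix (Fin 2 × Fin 2) (Fin 2 × Fin 2) ℂ) : ℝ :=
  Real.sqrt (((Aᴴ * A).trace).re)

lemma tr_one' : (1 : Matrix (Fin 2 × Fin 2) (Fin 2 × Fin 2) ℂ).trace = 4 := by
  simp [Matrix.trace, Fintype.sum_prod_type, Fin.sum_univ_succ]

lemma tr_P : paulidot.trace = 0 := by
  simp [paulidot, Matrix.trace, Fintype.sum_prod_type, Fin.sum_univ_succ, pauli,
    Matrix.sum_apply, kroneckerMap_apply]

lemma P_herm : paulidotᴴ = paulidot := by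
  ext ⟨a,b⟩ ⟨c,d⟩
  simp only [paulidot, Matrix.sum_apply, kroneckerMap_apply, conjTranspose_apply,
    Fin.sum_univ_three, pauli]
  fin_cases a <;> fin_cases b <;> fin_cases c <;> fin_cases d <;> simp

lemma tr_PP : (paulidot * paulidot).trace = 12 := by
  simp [paulidot, Matrix.trace, Matrix.mul_apply, Fintype.sum_prod_type, Fin.sum_univ_succ,
    Fin.sum_univ_three, pauli, Matrix.sum_apply, kroneckerMap_apply]
  ring_nf

lemma tr_werner_mul (a : ℂ) :
    ((((1 : Matrix (Fin 2 × Fin 2) (Fin 2 × Fin 2) ℂ) - a • paulidot)) *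
      ((1 : Matrix (Fin 2 × Fin 2) (Fin 2 × Fin 2) ℂ) + paulidot)).trace = 4 - 12 * a := by
  rw [sub_mul, mul_add, mul_add, one_mul, one_mul, smul_mul_assoc, smul_mul_assoc, mul_one]
  rw [trace_sub, trace_add, trace_add, trace_smul, trace_smul, tr_one', tr_P, tr_PP]
  simp [smul_eq_mul]
  ring

lemma sqrt3_pos : (0:ℝ) < Real.sqrt 3 := Real.sqrt_pos.2 (by norm_num)

lemma trace_wA (α : ℝ) :
    ((wernerBloch α * Aopt).trace : ℂ)
      = ((-(Real.sqrt 3 / 2 * (α - 1 / 3)) : ℝ) : ℂ) := by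
  unfold wernerBloch Aopt
  rw [smul_mul_assoc, mul_smul_comm, trace_smul, trace_smul, tr_werner_mul]
  have h3 : (Real.sqrt 3 : ℂ) * (Real.sqrt 3 : ℂ) = 3 := by
    rw [← Complex.ofReal_mul, Real.mul_self_sqrt (by norm_num)]
    norm_num
  have hne : (Real.sqrt 3 : ℂ) ≠ 0 := by
    simpa using (Complex.ofReal_ne_zero.2 (ne_of_gt sqrt3_pos))
  push_cast
  field_simp
  ring_nf
  rw [show ((Real.sqrt 3:ℂ))⁻¹ = (Real.sqrt 3:ℂ) / 3 by rw [eq_div_iff (by norm_num), ← h3, inv_mul_cancel_left₀ hne]]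
  ring

theorem werner_bnt_computation (α : ℝ) (hα : 1 / 3 < α) (hα1 : α ≤ 1) :
    hsNorm (ρ₀ - wernerBloch α) = Real.sqrt 3 / 2 * (α - 1 / 3) ∧
    ((wernerBloch α * Aopt).trace : ℂ)
      = ((-(Real.sqrt 3 / 2 * (α - 1 / 3)) : ℝ) : ℂ) ∧
    ((wernerBloch α * Aopt).trace).re < 0 ∧
    ((ρ₀ * Aopt).trace : ℂ) = 0 := by
  have hc : (0:ℝ) ≤ (α - 1/3)/4 := by linarith
  have hdiff : ρ₀ - wernerBloch α = (((α - 1/3)/4 : ℝ) : ℂ) • paulidot := by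
    unfold ρ₀ wernerBloch
    push_cast
    module
  have hnorm : hsNorm (ρ₀ - wernerBloch α) = Real.sqrt 3 / 2 * (α - 1 / 3) := by
    rw [hsNorm, hdiff]
    rw [conjTranspose_smul, P_herm, smul_mul_assoc, mul_smul_comm, trace_smul, trace_smul, tr_PP]
    rw [show (star (((α - 1/3)/4 : ℝ) : ℂ)) = (((α - 1/3)/4 : ℝ) : ℂ) from Complex.conj_ofReal _]
    have hre : ((((α - 1/3)/4 : ℝ) : ℂ) • ((((α - 1/3)/4 : ℝ) : ℂ) • (12:ℂ))).re
        = 12 * ((α - 1/3)/4)^2 := by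
      simp [smul_eq_mul]
      ring
    rw [hre]
    have h12 : 12 * ((α - 1/3)/4)^2 = (Real.sqrt 3 / 2 * (α - 1 / 3))^2 := by
      have h3 : (Real.sqrt 3)^2 = 3 := Real.sq_sqrt (by norm_num)
      nlinarith [h3]
    rw [h12, Real.sqrt_sq (mul_nonneg (by positivity) (by linarith))]
  have htr := trace_wA α
  have hre : ((wernerBloch α * Aopt).trace).re < 0 := by
    rw [htr]
    simp only [Complex.ofReal_re]
    have : 0 < Real.sqrt 3 / 2 * (α - 1 / 3) := by
      apply mul_pos (by positivity)
      linarith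
    linarith
  have h0 : ((ρ₀ * Aopt).trace : ℂ) = 0 := by
    rw [ρ₀, trace_wA (1/3)]
    norm_num
  exact ⟨hnorm, htr, hre, h0⟩

end
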